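/- arXiv:0906.2112 — 6 statements merged into one kernel-verified Lean document; each statement's English description precedes it below -/
import Mathlib

section
/- Let K be a field, g ≥ 2 an integer, and a_1, …, a_{2g+2} pairwise distinct elements of K. Let α, β, γ, δ ∈ K with αδ − βγ ≠ 0 and γ·a_r + δ ≠ 0 for every r, and set a'_r := (α·a_r + β)/(γ·a_r + δ). Then the elements a'_1, …, a'_{2g+2} are pairwise distinct, and for all distinct indices i, j, k one has L'_{ijk} = L_{ijk}, where L_{ijk} (resp. L'_{ijk}) is computed from the tuple (a_r) (resp. (a'_r)). In other words, the 2g-th powers of the symmetric roots are invariant under fractional linear changes of the coordinate. -/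
open Finset

/-- The `2g`-th power of the symmetric root `ℓ_{ijk}` attached to the branch
points `a_1, …, a_{2g+2}`:
`L_{ijk} = ((a_i − a_k)/(a_j − a_k))^{2g} · ∏_{r ∉ {i,j}} (a_j − a_r)/(a_i − a_r)`. -/
noncomputable def symL {K : Type*} [Field K] (g : ℕ) (a : Fin (2 * g + 2) → K)
    (i j k : Fin (2 * g + 2)) : K :=
  ((a i - a k) / (a j - a k)) ^ (2 * g) *
    ∏ r ∈ univ \ {i, j}, (a j - a r) / (a i - a r)

lemma moeb_sub {K : Type*} [Field K] (α β γ δ x y : K)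
    (hx : γ * x + δ ≠ 0) (hy : γ * y + δ ≠ 0) :
    (α * x + β) / (γ * x + δ) - (α * y + β) / (γ * y + δ)
      = (α * δ - β * γ) * (x - y) / ((γ * x + δ) * (γ * y + δ)) := by
  rw [div_sub_div _ _ hx hy]
  ring

/-- the `2g`-th powers of the symmetric roots are invariant under
fractional linear changes of the coordinate. -/
theorem symL_moebius_invariant
    {K : Type*} [Field K] (g : ℕ) (hg : 2 ≤ g)
    (a : Fin (2 * g + 2) → K) (ha : Function.Injective a)
    (α β γ δ : K) (hdet : α * δ - β * γ ≠ 0) (hden : ∀ r, γ * a r + δ ≠ 0) :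
    Function.Injective (fun r => (α * a r + β) / (γ * a r + δ)) ∧
    ∀ i j k : Fin (2 * g + 2), i ≠ j → j ≠ k → i ≠ k →
      symL g (fun r => (α * a r + β) / (γ * a r + δ)) i j k = symL g a i j k := by
  have hne : ∀ x y : Fin (2 * g + 2), x ≠ y → a x - a y ≠ 0 := by
    intro x y h
    exact sub_ne_zero.mpr (fun e => h (ha e))
  have key : ∀ x y : Fin (2 * g + 2),
      (α * a x + β) / (γ * a x + δ) - (α * a y + β) / (γ * a y + δ)
        = (α * δ - β * γ) * (a x - a y) / ((γ * a x + δ) * (γ * a y + δ)) :=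
    fun x y => moeb_sub α β γ δ (a x) (a y) (hden x) (hden y)
  constructor
  · intro x y h
    simp only at h
    rw [← sub_eq_zero, key] at h
    have := div_eq_zero_iff.mp h
    rcases this with h' | h'
    · rcases mul_eq_zero.mp h' with h'' | h''
      · exact absurd h'' hdet
      · exact ha (sub_eq_zero.mp h'')
    · exact absurd h' (mul_ne_zero (hden x) (hden y))
  · intro i j k hij hjk hik
    unfold symL
    simp only
    have hci := hden i
    have hcj := hden j
    have hck := hden k
    have h1 : (α * a i + β) / (γ * a i + δ) - (α * a k + β) / (γ * a k + δ)
        = (α * δ - β * γ) * (a i - a k) / ((γ * a i + δ) * (γ * a k + δ)) := key i k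
    have h2 : (α * a j + β) / (γ * a j + δ) - (α * a k + β) / (γ * a k + δ)
        = (α * δ - β * γ) * (a j - a k) / ((γ * a j + δ) * (γ * a k + δ)) := key j k
    rw [h1, h2]
    have hjk' := hne j k hjk
    have hfac : (α * δ - β * γ) * (a i - a k) / ((γ * a i + δ) * (γ * a k + δ)) /
        ((α * δ - β * γ) * (a j - a k) / ((γ * a j + δ) * (γ * a k + δ)))
        = (a i - a k) / (a j - a k) * ((γ * a j + δ) / (γ * a i + δ)) := by
      field_simp
    rw [hfac]
    have hprod : ∏ r ∈ univ \ {i, j},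
        ((α * a j + β) / (γ * a j + δ) - (α * a r + β) / (γ * a r + δ)) /
          ((α * a i + β) / (γ * a i + δ) - (α * a r + β) / (γ * a r + δ))
        = ∏ r ∈ univ \ {i, j},
            ((a j - a r) / (a i - a r) * ((γ * a i + δ) / (γ * a j + δ))) := by
      refine Finset.prod_congr rfl ?_
      intro r hr
      simp only [mem_sdiff, mem_insert, mem_singleton, not_or] at hr
      obtain ⟨-, hri, hrj⟩ := hr
      have hir := hne i r (fun e => hri e.symm)
      have hjr := hne j r (fun e => hrj e.symm)
      have hcr := hden r
      rw [key j r, key i r]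
      field_simp
    rw [hprod, Finset.prod_mul_distrib, Finset.prod_const]
    have hcard : (univ \ ({i, j} : Finset (Fin (2 * g + 2)))).card = 2 * g := by
      rw [Finset.card_sdiff_of_subset (Finset.subset_univ _), Finset.card_univ]
      simp [Finset.card_insert_of_notMem, hij]
    rw [hcard]
    have hpow : ((a i - a k) / (a j - a k) * ((γ * a j + δ) / (γ * a i + δ))) ^ (2 * g) *
        ((γ * a i + δ) / (γ * a j + δ)) ^ (2 * g)
        = ((a i - a k) / (a j - a k)) ^ (2 * g) := by
      rw [← mul_pow]
      congr 1
      rw [mul_assoc, div_mul_div_comm, mul_comm (γ * a j + δ), div_self (mul_ne_zero hci hcj), mul_one]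
    calc ((a i - a k) / (a j - a k) * ((γ * a j + δ) / (γ * a i + δ))) ^ (2 * g) *
          ((∏ r ∈ univ \ {i, j}, (a j - a r) / (a i - a r)) *
            ((γ * a i + δ) / (γ * a j + δ)) ^ (2 * g))
        = (((a i - a k) / (a j - a k) * ((γ * a j + δ) / (γ * a i + δ))) ^ (2 * g) *
            ((γ * a i + δ) / (γ * a j + δ)) ^ (2 * g)) *
          ∏ r ∈ univ \ {i, j}, (a j - a r) / (a i - a r) := by ring
      _ = _ := by rw [hpow]
end

section
/- Let K be a field, g ≥ 2 an integer, and a_1, …, a_{2g+2} pairwise distinct elements of K. Let σ : K → K be a ring homomorphism and π a permutation of the index set {1, …, 2g+2} such that σ(a_r) = a_{π(r)} for all r. If i, j, k are pairwise distinct indices fixed by π (π(i) = i, π(j) = j, π(k) = k), then σ(L_{ijk}) = L_{ijk}. In particular, the 2g-th power of the symmetric root ℓ_{ijk} lies in the field of definition of the triple of Weierstrass points indexed by i, j, k. -/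
open Finset

/-- if a ring endomorphism `σ` of `K` permutes the branch points by
a permutation `π` fixing `i`, `j`, `k`, then `σ` fixes `L_{ijk}`; in particular
`ℓ_{ijk}^{2g}` lies in the field of definition of the triple of Weierstrass
points indexed by `i, j, k`. -/
theorem symL_fixed_by_symmetry
    {K : Type*} [Field K] (g : ℕ) (hg : 2 ≤ g)
    (a : Fin (2 * g + 2) → K) (ha : Function.Injective a)
    (σ : K →+* K) (π : Equiv.Perm (Fin (2 * g + 2))) (hσ : ∀ r, σ (a r) = a (π r))
    (i j k : Fin (2 * g + 2)) (hij : i ≠ j) (hjk : j ≠ k) (hik : i ≠ k)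
    (hi : π i = i) (hj : π j = j) (hk : π k = k) :
    σ (symL g a i j k) = symL g a i j k := by
  unfold symL
  rw [map_mul, map_pow, map_div₀, map_sub, map_sub, hσ, hσ, hi, hk, map_prod]
  have hj' : σ (a j) = a j := by rw [hσ, hj]
  rw [hj']
  congr 1
  have key : ∀ r, σ ((a j - a r) / (a i - a r)) =
      (a j - a (π r)) / (a i - a (π r)) := by
    intro r
    simp only [map_div₀, map_sub, hσ, hi, hj]
  simp only [key]
  refine Finset.prod_nbij' (fun r => π r) (fun r => π.symm r) ?_ ?_ ?_ ?_ ?_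
  · intro r hr
    simp only [Finset.mem_sdiff, Finset.mem_insert, Finset.mem_singleton] at hr ⊢
    refine ⟨Finset.mem_univ _, fun h => hr.2 ?_⟩
    rcases h with h | h
    · left; exact π.injective (by rw [h, hi])
    · right; exact π.injective (by rw [h, hj])
  · intro r hr
    simp only [Finset.mem_sdiff, Finset.mem_insert, Finset.mem_singleton] at hr ⊢
    refine ⟨Finset.mem_univ _, fun h => hr.2 ?_⟩
    rcases h with h | h
    · left
      have : π.symm i = i := by rw [Equiv.symm_apply_eq, hi]
      exact π.symm.injective (h.trans this.symm)
    · right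
      have : π.symm j = j := by rw [Equiv.symm_apply_eq, hj]
      exact π.symm.injective (h.trans this.symm)
  · intro r _; exact π.symm_apply_apply r
  · intro r _; exact π.apply_symm_apply r
  · intro r _; rfl
end

section
/- Let K be a field, g ≥ 2 an integer, and a_1, …, a_{2g+2} pairwise distinct elements of K. Then for all pairwise distinct indices i, j, k the cocycle relation L_{ijk} · L_{jki} · L_{kij} = −1 holds, i.e. ℓ_{ijk}^{2g} · ℓ_{jki}^{2g} · ℓ_{kij}^{2g} = −1. -/
open Finset

/-- the cocycle relation
`ℓ_{ijk}^{2g} · ℓ_{jki}^{2g} · ℓ_{kij}^{2g} = −1`. -/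
theorem symL_cocycle
    {K : Type*} [Field K] (g : ℕ) (hg : 2 ≤ g)
    (a : Fin (2 * g + 2) → K) (ha : Function.Injective a)
    (i j k : Fin (2 * g + 2)) (hij : i ≠ j) (hjk : j ≠ k) (hik : i ≠ k) :
    symL g a i j k * symL g a j k i * symL g a k i j = -1 := by
  have hki : k ≠ i := hik.symm
  have hji : j ≠ i := hij.symm
  have hkj : k ≠ j := hjk.symm
  have hij' : a i - a j ≠ 0 := sub_ne_zero.mpr fun h => hij (ha h)
  have hji' : a j - a i ≠ 0 := sub_ne_zero.mpr fun h => hji (ha h)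
  have hjk' : a j - a k ≠ 0 := sub_ne_zero.mpr fun h => hjk (ha h)
  have hkj' : a k - a j ≠ 0 := sub_ne_zero.mpr fun h => hkj (ha h)
  have hik' : a i - a k ≠ 0 := sub_ne_zero.mpr fun h => hik (ha h)
  have hki' : a k - a i ≠ 0 := sub_ne_zero.mpr fun h => hki (ha h)
  set s : Finset (Fin (2 * g + 2)) := univ \ {i, j, k} with hs
  have hks : k ∉ s := by simp [hs]
  have his : i ∉ s := by simp [hs]
  have hjs : j ∉ s := by simp [hs]
  have e1 : (univ \ ({i, j} : Finset (Fin (2 * g + 2)))) = insert k s := by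
    ext r
    by_cases h : r = k <;> simp [hs, h, hki, hkj] <;> tauto
  have e2 : (univ \ ({j, k} : Finset (Fin (2 * g + 2)))) = insert i s := by
    ext r
    by_cases h : r = i <;> simp [hs, h, hij, hik] <;> tauto
  have e3 : (univ \ ({k, i} : Finset (Fin (2 * g + 2)))) = insert j s := by
    ext r
    by_cases h : r = j <;> simp [hs, h, hji, hjk] <;> tauto
  have hprod : (∏ r ∈ s, (a j - a r) / (a i - a r)) *
      (∏ r ∈ s, (a k - a r) / (a j - a r)) *
      (∏ r ∈ s, (a i - a r) / (a k - a r)) = 1 := by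
    rw [← prod_mul_distrib, ← prod_mul_distrib]
    apply prod_eq_one
    intro r hr
    simp only [hs, mem_sdiff, mem_univ, mem_insert, mem_singleton, true_and] at hr
    push_neg at hr
    have h1 : a i - a r ≠ 0 := sub_ne_zero.mpr fun h => hr.1 (ha h).symm
    have h2 : a j - a r ≠ 0 := sub_ne_zero.mpr fun h => hr.2.1 (ha h).symm
    have h3 : a k - a r ≠ 0 := sub_ne_zero.mpr fun h => hr.2.2 (ha h).symm
    field_simp
  have hpow : ((a i - a k) / (a j - a k)) ^ (2 * g) *
      ((a j - a i) / (a k - a i)) ^ (2 * g) *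
      ((a k - a j) / (a i - a j)) ^ (2 * g) = 1 := by
    rw [← mul_pow, ← mul_pow,
      show (a i - a k) / (a j - a k) * ((a j - a i) / (a k - a i)) *
        ((a k - a j) / (a i - a j)) = -1 from by field_simp; ring,
      Even.neg_one_pow ⟨g, two_mul g⟩]
  have hfr : (a j - a k) / (a i - a k) * ((a k - a i) / (a j - a i)) *
      ((a i - a j) / (a k - a j)) = -1 := by
    field_simp; ring
  rw [symL, symL, symL, e1, e2, e3, prod_insert hks, prod_insert his, prod_insert hjs]
  calc ((a i - a k) / (a j - a k)) ^ (2 * g) *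
        ((a j - a k) / (a i - a k) * ∏ r ∈ s, (a j - a r) / (a i - a r)) *
      (((a j - a i) / (a k - a i)) ^ (2 * g) *
        ((a k - a i) / (a j - a i) * ∏ r ∈ s, (a k - a r) / (a j - a r))) *
      (((a k - a j) / (a i - a j)) ^ (2 * g) *
        ((a i - a j) / (a k - a j) * ∏ r ∈ s, (a i - a r) / (a k - a r)))
      = (((a i - a k) / (a j - a k)) ^ (2 * g) *
          ((a j - a i) / (a k - a i)) ^ (2 * g) *
          ((a k - a j) / (a i - a j)) ^ (2 * g)) *
        ((a j - a k) / (a i - a k) * ((a k - a i) / (a j - a i)) *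
          ((a i - a j) / (a k - a j))) *
        ((∏ r ∈ s, (a j - a r) / (a i - a r)) *
          (∏ r ∈ s, (a k - a r) / (a j - a r)) *
          (∏ r ∈ s, (a i - a r) / (a k - a r))) := by ring
    _ = 1 * -1 * 1 := by rw [hpow, hfr, hprod]
    _ = -1 := by ring
end

section
/- Let K be an algebraically closed field of characteristic different from 2, g ≥ 2 an integer, and a_1, …, a_{2g+2} pairwise distinct elements of K. Let i, j, k be pairwise distinct indices. For each of the pairs (i,k), (j,k), (i,j), choose symmetric roots via some λ with the appropriate 2g-th power condition, and let d_{ik}, d_{jk} denote the corresponding symmetric discriminants and ℓ_{ijk} a symmetric root of the pair (i,j) at index k. Then d_{ik}/d_{jk} = −ℓ_{ijk}^{2g(2g+1)}. (Both sides are independent of all choices of λ, since ℓ_{ijk} is well defined up to a 2g-th root of unity and the exponent 2g(2g+1) is divisible by 2g.) -/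
open Finset

/-- The symmetric root `ℓ_{ijk} = λ·(a_i − a_k)/(a_j − a_k)` attached to the
branch points `a_1, …, a_{2g+2}`, the pair `(i,j)` and a choice of scalar `λ`. -/
noncomputable def symRoot {K : Type*} [Field K] (g : ℕ) (a : Fin (2 * g + 2) → K)
    (i j : Fin (2 * g + 2)) (lam : K) (k : Fin (2 * g + 2)) : K :=
  lam * (a i - a k) / (a j - a k)

/-- The symmetric discriminant `d_{ij} = ∏_{r ≠ s, r,s ∉ {i,j}} (ℓ_{ijr} − ℓ_{ijs})`,
the product taken over ordered pairs of distinct indices `r, s` outside `{i,j}`. -/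
noncomputable def symDisc {K : Type*} [Field K] (g : ℕ) (a : Fin (2 * g + 2) → K)
    (i j : Fin (2 * g + 2)) (lam : K) : K :=
  ∏ r ∈ univ \ {i, j}, ∏ s ∈ (univ \ {i, j}) \ {r},
    (symRoot g a i j lam r - symRoot g a i j lam s)

section helpers

variable {K : Type*} [Field K]

lemma prod_pairs_swap {ι : Type*} [DecidableEq ι] (S : Finset ι) (F : ι → ι → K) :
    ∏ r ∈ S, ∏ s ∈ S \ {r}, F r s = ∏ s ∈ S, ∏ r ∈ S \ {s}, F r s := by
  refine Finset.prod_comm' ?_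
  intro r s
  simp only [mem_sdiff, mem_singleton]
  constructor
  · rintro ⟨h1, h2, h3⟩; exact ⟨⟨h1, fun h => h3 h.symm⟩, h2⟩
  · rintro ⟨⟨h1, h3⟩, h2⟩; exact ⟨h1, h2, fun h => h3 h.symm⟩

lemma prod_pairs_insert {ι : Type*} [DecidableEq ι] (b : ι → K) (T : Finset ι) (x : ι)
    (hx : x ∉ T) (hodd : Odd T.card) :
    ∏ r ∈ insert x T, ∏ s ∈ insert x T \ {r}, (b r - b s)
      = -((∏ s ∈ T, (b x - b s)) ^ 2 * ∏ r ∈ T, ∏ s ∈ T \ {r}, (b r - b s)) := by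
  rw [prod_insert hx]
  have h0 : insert x T \ {x} = T := by rw [← erase_eq, erase_insert hx]
  rw [h0]
  have h1 : ∏ r ∈ T, ∏ s ∈ insert x T \ {r}, (b r - b s)
      = ∏ r ∈ T, ((b r - b x) * ∏ s ∈ T \ {r}, (b r - b s)) := by
    refine prod_congr rfl fun r hr => ?_
    have hrx : r ≠ x := fun h => hx (h ▸ hr)
    have hsd : insert x T \ {r} = insert x (T \ {r}) := by
      rw [← erase_eq, ← erase_eq, erase_insert_of_ne hrx.symm]
    rw [hsd, prod_insert (by simp [mem_sdiff, hx])]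
  rw [h1, prod_mul_distrib]
  have h2 : ∏ r ∈ T, (b r - b x) = (-1 : K) ^ T.card * ∏ r ∈ T, (b x - b r) := by
    calc ∏ r ∈ T, (b r - b x) = ∏ r ∈ T, (-1 * (b x - b r)) := by
          refine prod_congr rfl fun r _ => by ring
      _ = (-1 : K) ^ T.card * ∏ r ∈ T, (b x - b r) := by
          rw [prod_mul_distrib, prod_const]
  rw [h2, hodd.neg_one_pow]
  ring

lemma symDisc_closed (g n : ℕ) (hn : 2 * g = n + 1) (a : Fin (2 * g + 2) → K)
    (ha : Function.Injective a) (x y : Fin (2 * g + 2)) (hxy : x ≠ y) (lam : K)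
    (hlam : lam ^ (2 * g) = ∏ r ∈ univ \ {x, y}, (a y - a r) / (a x - a r)) :
    symDisc g a x y lam *
      ((∏ r ∈ univ \ {x, y}, (a x - a r)) * ∏ r ∈ univ \ {x, y}, (a y - a r)) ^ n
    = (a x - a y) ^ ((n + 1) * n) *
        ∏ r ∈ univ \ {x, y}, ∏ s ∈ (univ \ {x, y}) \ {r}, (a r - a s) := by
  set S := univ \ ({x, y} : Finset (Fin (2 * g + 2))) with hS
  have hScard : S.card = n + 1 := by
    rw [hS, card_sdiff_of_subset (subset_univ _), card_pair hxy, card_univ, Fintype.card_fin]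
    omega
  have hmem : ∀ r ∈ S, r ≠ x ∧ r ≠ y := by
    intro r hr
    rw [hS] at hr
    simp only [mem_sdiff, mem_univ, true_and, mem_insert, mem_singleton, not_or] at hr
    exact hr
  have hyne : ∀ r ∈ S, a y - a r ≠ 0 := fun r hr =>
    sub_ne_zero.2 fun h => (hmem r hr).2 (ha h).symm
  have hxne : ∀ r ∈ S, a x - a r ≠ 0 := fun r hr =>
    sub_ne_zero.2 fun h => (hmem r hr).1 (ha h).symm
  have hP : (∏ r ∈ S, (a x - a r)) ≠ 0 := prod_ne_zero_iff.2 hxne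
  have hQ : (∏ r ∈ S, (a y - a r)) ≠ 0 := prod_ne_zero_iff.2 hyne
  have hcard1 : ∀ r ∈ S, (S \ {r}).card = n := by
    intro r hr
    rw [← erase_eq, card_erase_of_mem hr, hScard]
    omega
  have key1 : ∀ f : Fin (2 * g + 2) → K,
      ∏ r ∈ S, ∏ s ∈ S \ {r}, f r = (∏ r ∈ S, f r) ^ n := by
    intro f
    rw [← prod_pow]
    refine prod_congr rfl fun r hr => ?_
    rw [prod_const, hcard1 r hr]
  have key2 : ∀ f : Fin (2 * g + 2) → K,
      ∏ r ∈ S, ∏ s ∈ S \ {r}, f s = (∏ r ∈ S, f r) ^ n := by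
    intro f
    rw [prod_pairs_swap]
    exact key1 f
  have keyc : ∀ c : K, ∏ r ∈ S, ∏ _s ∈ S \ {r}, c = c ^ ((n + 1) * n) := by
    intro c
    rw [key1 (fun _ => c), prod_const, hScard, ← pow_mul]
  have step1 : symDisc g a x y lam = ∏ r ∈ S, ∏ s ∈ S \ {r},
      (lam * (a x - a y) * (a r - a s) / ((a y - a r) * (a y - a s))) := by
    unfold symDisc symRoot
    rw [← hS]
    refine prod_congr rfl fun r hr => prod_congr rfl fun s hs => ?_
    have hs' : s ∈ S := (mem_sdiff.1 hs).1
    have h1 := hyne r hr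
    have h2 := hyne s hs'
    field_simp
    ring
  have expand : symDisc g a x y lam
      = lam ^ ((n + 1) * n) * (a x - a y) ^ ((n + 1) * n) *
          (∏ r ∈ S, ∏ s ∈ S \ {r}, (a r - a s)) /
        ((∏ r ∈ S, (a y - a r)) ^ n * (∏ r ∈ S, (a y - a r)) ^ n) := by
    rw [step1]
    simp only [Finset.prod_div_distrib, Finset.prod_mul_distrib]
    rw [keyc lam, keyc (a x - a y), key1 (fun r => a y - a r), key2 (fun s => a y - a s)]
  have hlamN : lam ^ ((n + 1) * n)
      = (∏ r ∈ S, (a y - a r)) ^ n / (∏ r ∈ S, (a x - a r)) ^ n := by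
    rw [show (n + 1) * n = 2 * g * n by rw [hn], pow_mul, hlam, prod_div_distrib, div_pow]
  rw [expand, hlamN]
  field_simp
  ring

end helpers

lemma endgame_cancel {K : Type*} [Field K] (d1 d2 X1 X2 N1 N2 U V : K)
    (E1 : d1 * X1 = N1) (E2 : d2 * X2 = N2) (hX : X1 * X2 ≠ 0)
    (key : N1 * (V * X2) = -U * N2 * X1) : d1 * V = -(U * d2) := by
  refine mul_right_cancel₀ hX ?_
  calc d1 * V * (X1 * X2) = (d1 * X1) * (V * X2) := by ring
    _ = N1 * (V * X2) := by rw [E1]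
    _ = -U * N2 * X1 := key
    _ = -U * (d2 * X2) * X1 := by rw [E2]
    _ = -(U * d2) * (X1 * X2) := by ring

lemma key_identity {K : Type*} [Field K] (A B C P Q R D : K) (m : ℕ) :
    B ^ ((2 * m + 3 + 1) * (2 * m + 3)) * (Q ^ 2 * D) *
      ((B * P) ^ (2 * (m + 2) + 1) * C ^ (2 * (m + 2) * (2 * (m + 2) + 1)) *
        ((A * Q) * (B * R)) ^ (2 * m + 3))
    = -((C * Q) ^ (2 * (m + 2) + 1) * B ^ (2 * (m + 2) * (2 * (m + 2) + 1))) *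
        -(C ^ ((2 * m + 3 + 1) * (2 * m + 3)) * (P ^ 2 * D)) *
        ((A * P) * (C * R)) ^ (2 * m + 3) := by
  ring

set_option maxHeartbeats 2000000 in
/-- the formula `d_{ik}/d_{jk} = −ℓ_{ijk}^{2g(2g+1)}` relating
symmetric discriminants and symmetric roots. -/
theorem symDisc_ratio_eq_neg_symRoot_pow
    {K : Type*} [Field K] [IsAlgClosed K] (hchar : (2 : K) ≠ 0)
    (g : ℕ) (hg : 2 ≤ g) (a : Fin (2 * g + 2) → K) (ha : Function.Injective a)
    (i j k : Fin (2 * g + 2)) (hij : i ≠ j) (hjk : j ≠ k) (hik : i ≠ k)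
    (lamik lamjk lamij : K)
    (hlamik : lamik ^ (2 * g) = ∏ r ∈ univ \ {i, k}, (a k - a r) / (a i - a r))
    (hlamjk : lamjk ^ (2 * g) = ∏ r ∈ univ \ {j, k}, (a k - a r) / (a j - a r))
    (hlamij : lamij ^ (2 * g) = ∏ r ∈ univ \ {i, j}, (a j - a r) / (a i - a r)) :
    symDisc g a i k lamik / symDisc g a j k lamjk =
      -(symRoot g a i j lamij k) ^ (2 * g * (2 * g + 1)) := by
  obtain ⟨m, rfl⟩ : ∃ m, g = m + 2 := ⟨g - 2, by omega⟩
  set n : ℕ := 2 * m + 3 with hn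
  have hn' : 2 * (m + 2) = n + 1 := by omega
  set T : Finset (Fin (2 * (m + 2) + 2)) := univ \ {i, j, k} with hT
  have hmemT : ∀ r ∈ T, r ≠ i ∧ r ≠ j ∧ r ≠ k := by
    intro r hr
    rw [hT] at hr
    simp only [mem_sdiff, mem_univ, true_and, mem_insert, mem_singleton, not_or] at hr
    exact hr
  have hiT : i ∉ T := fun h => (hmemT i h).1 rfl
  have hjT : j ∉ T := fun h => (hmemT j h).2.1 rfl
  have hkT : k ∉ T := fun h => (hmemT k h).2.2 rfl
  have hTcard : T.card = n := by
    have h3 : ({i, j, k} : Finset (Fin (2 * (m + 2) + 2))).card = 3 := by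
      rw [card_insert_of_notMem (by simp [hij, hik]), card_pair hjk]
    rw [hT, card_sdiff_of_subset (subset_univ _), h3, card_univ, Fintype.card_fin]
    omega
  have hoddn : Odd n := ⟨m + 1, by omega⟩
  have hoddT : Odd T.card := hTcard ▸ hoddn
  -- set identities
  have hset1 : univ \ ({i, k} : Finset (Fin (2 * (m + 2) + 2))) = insert j T := by
    rw [hT]; ext r
    simp only [mem_sdiff, mem_univ, true_and, mem_insert, mem_singleton, not_or]
    constructor
    · rintro ⟨h1, h2⟩
      rcases eq_or_ne r j with rfl | h3
      · exact Or.inl rfl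
      · exact Or.inr ⟨h1, h3, h2⟩
    · rintro (rfl | ⟨h1, h2, h3⟩)
      · exact ⟨Ne.symm hij, hjk⟩
      · exact ⟨h1, h3⟩
  have hset2 : univ \ ({j, k} : Finset (Fin (2 * (m + 2) + 2))) = insert i T := by
    rw [hT]; ext r
    simp only [mem_sdiff, mem_univ, true_and, mem_insert, mem_singleton, not_or]
    constructor
    · rintro ⟨h1, h2⟩
      rcases eq_or_ne r i with rfl | h3
      · exact Or.inl rfl
      · exact Or.inr ⟨h3, h1, h2⟩
    · rintro (rfl | ⟨h1, h2, h3⟩)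
      · exact ⟨hij, hik⟩
      · exact ⟨h2, h3⟩
  have hset3 : univ \ ({i, j} : Finset (Fin (2 * (m + 2) + 2))) = insert k T := by
    rw [hT]; ext r
    simp only [mem_sdiff, mem_univ, true_and, mem_insert, mem_singleton, not_or]
    constructor
    · rintro ⟨h1, h2⟩
      rcases eq_or_ne r k with rfl | h3
      · exact Or.inl rfl
      · exact Or.inr ⟨h1, h2, h3⟩
    · rintro (rfl | ⟨h1, h2, h3⟩)
      · exact ⟨Ne.symm hik, Ne.symm hjk⟩
      · exact ⟨h1, h2⟩
  -- nonzero atoms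
  have hane : ∀ p q : Fin (2 * (m + 2) + 2), p ≠ q → a p - a q ≠ 0 := fun p q h =>
    sub_ne_zero.2 fun e => h (ha e)
  have hA : a i - a j ≠ 0 := hane i j hij
  have hB : a i - a k ≠ 0 := hane i k hik
  have hC : a j - a k ≠ 0 := hane j k hjk
  have hP : (∏ r ∈ T, (a i - a r)) ≠ 0 :=
    prod_ne_zero_iff.2 fun r hr => hane i r (Ne.symm (hmemT r hr).1)
  have hQ : (∏ r ∈ T, (a j - a r)) ≠ 0 :=
    prod_ne_zero_iff.2 fun r hr => hane j r (Ne.symm (hmemT r hr).2.1)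
  have hR : (∏ r ∈ T, (a k - a r)) ≠ 0 :=
    prod_ne_zero_iff.2 fun r hr => hane k r (Ne.symm (hmemT r hr).2.2)
  have hD : (∏ r ∈ T, ∏ s ∈ T \ {r}, (a r - a s)) ≠ 0 :=
    prod_ne_zero_iff.2 fun r hr => prod_ne_zero_iff.2 fun s hs =>
      hane r s fun e => (mem_sdiff.1 hs).2 (mem_singleton.2 e.symm)
  -- closed form for pair (i, k)
  have E1 := symDisc_closed (m + 2) n hn' a ha i k hik lamik hlamik
  rw [hset1, prod_insert hjT, prod_insert hjT, prod_pairs_insert a T j hjT hoddT] at E1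
  have hbase1 : ((a i - a j) * ∏ r ∈ T, (a i - a r)) * ((a k - a j) * ∏ r ∈ T, (a k - a r))
      = -(((a i - a j) * ∏ r ∈ T, (a i - a r)) * ((a j - a k) * ∏ r ∈ T, (a k - a r))) := by
    ring
  rw [hbase1, hoddn.neg_pow, mul_neg, mul_neg] at E1
  replace E1 := neg_injective E1
  -- closed form for pair (j, k)
  have E2 := symDisc_closed (m + 2) n hn' a ha j k hjk lamjk hlamjk
  rw [hset2, prod_insert hiT, prod_insert hiT, prod_pairs_insert a T i hiT hoddT] at E2
  have hbase2 : ((a j - a i) * ∏ r ∈ T, (a j - a r)) * ((a k - a i) * ∏ r ∈ T, (a k - a r))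
      = ((a i - a j) * ∏ r ∈ T, (a j - a r)) * ((a i - a k) * ∏ r ∈ T, (a k - a r)) := by
    ring
  rw [hbase2, mul_neg] at E2
  -- nonzero denominators
  have hX1 : (((a i - a j) * ∏ r ∈ T, (a i - a r)) * ((a j - a k) * ∏ r ∈ T, (a k - a r))) ^ n ≠ 0 :=
    pow_ne_zero _ (mul_ne_zero (mul_ne_zero hA hP) (mul_ne_zero hC hR))
  have hX2 : (((a i - a j) * ∏ r ∈ T, (a j - a r)) * ((a i - a k) * ∏ r ∈ T, (a k - a r))) ^ n ≠ 0 :=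
    pow_ne_zero _ (mul_ne_zero (mul_ne_zero hA hQ) (mul_ne_zero hB hR))
  -- the right-hand side
  have hroot : symRoot (m + 2) a i j lamij k = lamij * (a i - a k) / (a j - a k) := rfl
  have hlam' : lamij ^ (2 * (m + 2))
      = ((a j - a k) * ∏ r ∈ T, (a j - a r)) / ((a i - a k) * ∏ r ∈ T, (a i - a r)) := by
    rw [hlamij, hset3, prod_div_distrib, prod_insert hkT, prod_insert hkT]
  have hpow : (symRoot (m + 2) a i j lamij k) ^ (2 * (m + 2) * (2 * (m + 2) + 1))
      = (((a j - a k) * ∏ r ∈ T, (a j - a r)) / ((a i - a k) * ∏ r ∈ T, (a i - a r)))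
            ^ (2 * (m + 2) + 1) *
          ((a i - a k) / (a j - a k)) ^ (2 * (m + 2) * (2 * (m + 2) + 1)) := by
    rw [hroot, mul_div_assoc, mul_pow, pow_mul, hlam']
  have hN2 : -((a j - a k) ^ ((n + 1) * n) *
      ((∏ s ∈ T, (a i - a s)) ^ 2 * ∏ r ∈ T, ∏ s ∈ T \ {r}, (a r - a s))) ≠ 0 :=
    neg_ne_zero.2 (mul_ne_zero (pow_ne_zero _ hC) (mul_ne_zero (pow_ne_zero _ hP) hD))
  have hd2ne : symDisc (m + 2) a j k lamjk ≠ 0 := fun h0 => hN2 (by rw [← E2, h0, zero_mul])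
  have hDen : (((a j - a k) * ∏ r ∈ T, (a j - a r)) ^ (2 * (m + 2) + 1)) *
      ((a i - a k) / (a j - a k)) ^ (2 * (m + 2) * (2 * (m + 2) + 1)) ≠ 0 := by
    exact mul_ne_zero (pow_ne_zero _ (mul_ne_zero hC hQ))
      (pow_ne_zero _ (div_ne_zero hB hC))
  rw [div_eq_iff hd2ne]
  rw [hpow]
  rw [div_pow, div_pow]
  rw [div_mul_div_comm]
  rw [neg_mul]
  rw [div_mul_eq_mul_div]
  rw [← neg_div]
  rw [eq_div_iff (mul_ne_zero
      (pow_ne_zero _ (mul_ne_zero hB hP)) (pow_ne_zero _ hC))]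
  exact endgame_cancel _ _ _ _ _ _ _ _ E1 E2 (mul_ne_zero hX1 hX2)
    (key_identity (a i - a j) (a i - a k) (a j - a k) (∏ r ∈ T, (a i - a r))
      (∏ r ∈ T, (a j - a r)) (∏ r ∈ T, (a k - a r))
      (∏ r ∈ T, ∏ s ∈ T \ {r}, (a r - a s)) m)
end

section
/- Let K be an algebraically closed field of characteristic different from 2, g ≥ 2 an integer, and a_1, …, a_{2g+2} pairwise distinct elements of K. Fix an index i, and for each k ≠ i choose symmetric roots of the pair (i,k) via some λ_{ik} with λ_{ik}^{2g} = ∏_{r ∉ {i,k}} (a_k − a_r)/(a_i − a_r), with corresponding symmetric discriminant d_{ik}. Then ∏_{k ≠ i} d_{ik} = 1. -/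
set_option maxHeartbeats 1000000


open Finset

/-- the product of the symmetric discriminants `d_{ik}` over all
`k ≠ i` equals `1`. -/
theorem prod_symDisc_eq_one
    {K : Type*} [Field K] [IsAlgClosed K] (hchar : (2 : K) ≠ 0)
    (g : ℕ) (hg : 2 ≤ g) (a : Fin (2 * g + 2) → K) (ha : Function.Injective a)
    (i : Fin (2 * g + 2)) (lam : Fin (2 * g + 2) → K)
    (hlam : ∀ k, k ≠ i →
      (lam k) ^ (2 * g) = ∏ r ∈ univ \ {i, k}, (a k - a r) / (a i - a r)) :
    ∏ k ∈ univ \ {i}, symDisc g a i k (lam k) = 1 := by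
  classical
  obtain ⟨e, he⟩ : ∃ e, 2 * g = e + 1 := ⟨2 * g - 1, by omega⟩
  -- basic nonvanishing
  have hsub : ∀ {r s : Fin (2 * g + 2)}, r ≠ s → a r - a s ≠ 0 :=
    fun h => sub_ne_zero.mpr (fun hh => h (ha hh))
  have hmemS : ∀ {k r : Fin (2 * g + 2)}, r ∈ univ \ ({i, k} : Finset _) ↔ r ≠ i ∧ r ≠ k := by
    intro k r; simp [not_or]
  have hmemT : ∀ {r : Fin (2 * g + 2)}, r ∈ univ \ ({i} : Finset _) ↔ r ≠ i := by
    intro r; simp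
  -- cardinalities
  have hcardT : (univ \ ({i} : Finset (Fin (2 * g + 2)))).card = e + 2 := by
    rw [card_sdiff_of_subset (subset_univ _), card_univ, Fintype.card_fin, card_singleton]; omega
  have hcardS : ∀ k : Fin (2 * g + 2), k ≠ i →
      (univ \ ({i, k} : Finset (Fin (2 * g + 2)))).card = e + 1 := by
    intro k hk
    rw [card_sdiff_of_subset (subset_univ _), card_univ, Fintype.card_fin, card_pair (Ne.symm hk)]; omega
  have hcardS' : ∀ k : Fin (2 * g + 2), k ≠ i → ∀ r ∈ univ \ ({i, k} : Finset _),
      ((univ \ ({i, k} : Finset (Fin (2 * g + 2)))) \ {r}).card = e := by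
    intro k hk r hr
    rw [sdiff_singleton_eq_erase, card_erase_of_mem hr, hcardS k hk]
    omega
  -- set identities
  have hTS : ∀ k : Fin (2 * g + 2), k ≠ i →
      ((univ \ ({i} : Finset (Fin (2 * g + 2)))) \ {k}) = univ \ ({i, k} : Finset _) := by
    intro k hk; ext r; simp [not_or, and_assoc]
  have hinsert : ∀ k : Fin (2 * g + 2), k ≠ i →
      insert k (univ \ ({i, k} : Finset (Fin (2 * g + 2)))) = univ \ {i} := by
    intro k hk; ext r
    rcases eq_or_ne r k with rfl | h
    · simp [hk, not_or]
    · simp [h, not_or]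
  have hknotS : ∀ k : Fin (2 * g + 2), k ∉ univ \ ({i, k} : Finset _) := by
    intro k; simp
  -- key nonvanishing of the auxiliary products
  have hP0 : ∀ k : Fin (2 * g + 2), k ≠ i →
      (∏ r ∈ univ \ ({i, k} : Finset _), (a k - a r)) ≠ 0 := by
    intro k hk
    exact prod_ne_zero_iff.mpr fun r hr => hsub (Ne.symm (hmemS.mp hr).2)
  have hQ0 : ∀ k : Fin (2 * g + 2),
      (∏ r ∈ univ \ ({i, k} : Finset _), (a i - a r)) ≠ 0 := by
    intro k
    exact prod_ne_zero_iff.mpr fun r hr => hsub (Ne.symm (hmemS.mp hr).1)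
  have hA0 : (∏ r ∈ univ \ ({i} : Finset _), (a i - a r)) ≠ 0 :=
    prod_ne_zero_iff.mpr fun r hr => hsub (Ne.symm (hmemT.mp hr))
  -- ∏_{k≠i} P k = Δ
  have hPΔ : (∏ k ∈ univ \ ({i} : Finset _), ∏ r ∈ univ \ ({i, k} : Finset _), (a k - a r))
      = ∏ k ∈ univ \ ({i} : Finset _), ∏ r ∈ (univ \ ({i} : Finset _)) \ {k}, (a k - a r) := by
    refine prod_congr rfl fun k hk => ?_
    rw [hTS k (hmemT.mp hk)]
  have hΔ0 : (∏ k ∈ univ \ ({i} : Finset _), ∏ r ∈ (univ \ ({i} : Finset _)) \ {k}, (a k - a r)) ≠ 0 := by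
    rw [← hPΔ]
    exact prod_ne_zero_iff.mpr fun k hk => hP0 k (hmemT.mp hk)
  -- (a i - a k) * Q k = A
  have hQA : ∀ k : Fin (2 * g + 2), k ≠ i →
      (a i - a k) * ∏ r ∈ univ \ ({i, k} : Finset _), (a i - a r)
        = ∏ r ∈ univ \ ({i} : Finset _), (a i - a r) := by
    intro k hk
    rw [← hinsert k hk, prod_insert (hknotS k)]
  -- ∏ (a r - a k) over S k equals P k
  have hrev : ∀ k : Fin (2 * g + 2), k ≠ i →
      (∏ r ∈ univ \ ({i, k} : Finset _), (a r - a k))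
        = ∏ r ∈ univ \ ({i, k} : Finset _), (a k - a r) := by
    intro k hk
    calc (∏ r ∈ univ \ ({i, k} : Finset _), (a r - a k))
        = ∏ r ∈ univ \ ({i, k} : Finset _), ((-1) * (a k - a r)) :=
          prod_congr rfl fun r _ => by ring
      _ = (-1) ^ (e + 1) * ∏ r ∈ univ \ ({i, k} : Finset _), (a k - a r) := by
          rw [prod_mul_distrib, prod_const, hcardS k hk]
      _ = ∏ r ∈ univ \ ({i, k} : Finset _), (a k - a r) := by
          rw [← he, pow_mul]; simp
  -- D k * P k ^ 2 = Δ
  have hD : ∀ k : Fin (2 * g + 2), k ≠ i →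
      (∏ r ∈ univ \ ({i, k} : Finset _), ∏ s ∈ (univ \ ({i, k} : Finset _)) \ {r}, (a r - a s))
        * (∏ r ∈ univ \ ({i, k} : Finset _), (a k - a r)) ^ 2
      = ∏ k ∈ univ \ ({i} : Finset _), ∏ r ∈ (univ \ ({i} : Finset _)) \ {k}, (a k - a r) := by
    intro k hk
    have hkT : k ∈ univ \ ({i} : Finset _) := hmemT.mpr hk
    have herase : (univ \ ({i} : Finset (Fin (2 * g + 2)))).erase k = univ \ {i, k} := by
      rw [← sdiff_singleton_eq_erase, hTS k hk]
    have hinner : ∀ r ∈ univ \ ({i, k} : Finset (Fin (2 * g + 2))),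
        (∏ s ∈ (univ \ ({i} : Finset _)) \ {r}, (a r - a s))
          = (a r - a k) * ∏ s ∈ (univ \ ({i, k} : Finset _)) \ {r}, (a r - a s) := by
      intro r hr
      have hkmem : k ∈ (univ \ ({i} : Finset (Fin (2 * g + 2)))) \ {r} := by
        simp [hk, Ne.symm (hmemS.mp hr).2, not_or]
      have hset : ((univ \ ({i} : Finset (Fin (2 * g + 2)))) \ {r}).erase k
          = (univ \ ({i, k} : Finset _)) \ {r} := by
        ext s
        simp only [mem_erase, mem_sdiff, mem_univ, true_and, mem_singleton, mem_insert, not_or]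
        tauto
      rw [← Finset.mul_prod_erase _ _ hkmem, hset]
    symm
    calc (∏ k ∈ univ \ ({i} : Finset _), ∏ r ∈ (univ \ ({i} : Finset _)) \ {k}, (a k - a r))
        = (∏ s ∈ (univ \ ({i} : Finset _)) \ {k}, (a k - a s))
            * ∏ r ∈ (univ \ ({i} : Finset _)).erase k,
                ∏ s ∈ (univ \ ({i} : Finset _)) \ {r}, (a r - a s) := by
          exact (Finset.mul_prod_erase _
            (fun r => ∏ s ∈ (univ \ ({i} : Finset _)) \ {r}, (a r - a s)) hkT).symm
      _ = (∏ s ∈ univ \ ({i, k} : Finset _), (a k - a s))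
            * ∏ r ∈ univ \ ({i, k} : Finset _),
                ((a r - a k) * ∏ s ∈ (univ \ ({i, k} : Finset _)) \ {r}, (a r - a s)) := by
          rw [hTS k hk, herase]
          exact congrArg _ (prod_congr rfl hinner)
      _ = (∏ s ∈ univ \ ({i, k} : Finset _), (a k - a s))
            * ((∏ r ∈ univ \ ({i, k} : Finset _), (a r - a k))
              * ∏ r ∈ univ \ ({i, k} : Finset _),
                  ∏ s ∈ (univ \ ({i, k} : Finset _)) \ {r}, (a r - a s)) := by
          rw [prod_mul_distrib]
      _ = (∏ r ∈ univ \ ({i, k} : Finset _),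
              ∏ s ∈ (univ \ ({i, k} : Finset _)) \ {r}, (a r - a s))
            * (∏ r ∈ univ \ ({i, k} : Finset _), (a k - a r)) ^ 2 := by
          rw [hrev k hk]; ring
  -- per-k formula for the symmetric discriminant
  have hd : ∀ k ∈ univ \ ({i} : Finset (Fin (2 * g + 2))),
      symDisc g a i k (lam k)
        = (a i - a k) ^ ((e + 1) * e)
          * (∏ r ∈ univ \ ({i, k} : Finset _), ∏ s ∈ (univ \ ({i, k} : Finset _)) \ {r}, (a r - a s))
          / ((∏ r ∈ univ \ ({i, k} : Finset _), (a k - a r))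
              * ∏ r ∈ univ \ ({i, k} : Finset _), (a i - a r)) ^ e := by
    intro k hkT
    have hk : k ≠ i := hmemT.mp hkT
    have hPne := hP0 k hk
    have hQne := hQ0 k
    -- rewrite each factor of the double product
    have h1 : symDisc g a i k (lam k)
        = ∏ r ∈ univ \ ({i, k} : Finset _), ∏ s ∈ (univ \ ({i, k} : Finset _)) \ {r},
            (lam k * (a i - a k) * (a r - a s) / ((a k - a r) * (a k - a s))) := by
      unfold symDisc symRoot
      refine prod_congr rfl fun r hr => prod_congr rfl fun s hs => ?_
      have h1 : a k - a r ≠ 0 := hsub (Ne.symm (hmemS.mp hr).2)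
      have h2 : a k - a s ≠ 0 := hsub (Ne.symm (hmemS.mp (mem_sdiff.mp hs).1).2)
      field_simp
      ring
    -- numerator
    have hnum : (∏ r ∈ univ \ ({i, k} : Finset _), ∏ s ∈ (univ \ ({i, k} : Finset _)) \ {r},
          (lam k * (a i - a k) * (a r - a s)))
        = (lam k * (a i - a k)) ^ ((e + 1) * e)
            * ∏ r ∈ univ \ ({i, k} : Finset _), ∏ s ∈ (univ \ ({i, k} : Finset _)) \ {r},
                (a r - a s) := by
      have hh : ∀ r ∈ univ \ ({i, k} : Finset (Fin (2 * g + 2))),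
          (∏ s ∈ (univ \ ({i, k} : Finset _)) \ {r}, (lam k * (a i - a k) * (a r - a s)))
            = (lam k * (a i - a k)) ^ e
                * ∏ s ∈ (univ \ ({i, k} : Finset _)) \ {r}, (a r - a s) := by
        intro r hr
        rw [prod_mul_distrib, prod_const, hcardS' k hk r hr]
      rw [prod_congr rfl hh, prod_mul_distrib, prod_const, hcardS k hk, ← pow_mul,
        Nat.mul_comm e (e + 1)]
    -- inner product of (a k - a s)
    have hZ : (∏ r ∈ univ \ ({i, k} : Finset _), ∏ s ∈ (univ \ ({i, k} : Finset _)) \ {r},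
          (a k - a s))
        = (∏ r ∈ univ \ ({i, k} : Finset _), (a k - a r)) ^ e := by
      have hmul : ∀ r ∈ univ \ ({i, k} : Finset (Fin (2 * g + 2))),
          (a k - a r) * ∏ s ∈ (univ \ ({i, k} : Finset _)) \ {r}, (a k - a s)
            = ∏ r ∈ univ \ ({i, k} : Finset _), (a k - a r) := by
        intro r hr
        rw [sdiff_singleton_eq_erase r (univ \ ({i, k} : Finset _))]
        exact Finset.mul_prod_erase _ (fun s => a k - a s) hr
      refine mul_left_cancel₀ hPne ?_
      calc (∏ r ∈ univ \ ({i, k} : Finset _), (a k - a r))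
            * ∏ r ∈ univ \ ({i, k} : Finset _), ∏ s ∈ (univ \ ({i, k} : Finset _)) \ {r},
                (a k - a s)
          = ∏ r ∈ univ \ ({i, k} : Finset _),
              ((a k - a r) * ∏ s ∈ (univ \ ({i, k} : Finset _)) \ {r}, (a k - a s)) := by
            rw [prod_mul_distrib]
        _ = ∏ r ∈ univ \ ({i, k} : Finset _),
              (∏ r ∈ univ \ ({i, k} : Finset _), (a k - a r)) := prod_congr rfl hmul
        _ = (∏ r ∈ univ \ ({i, k} : Finset _), (a k - a r)) ^ (e + 1) := by
            rw [prod_const, hcardS k hk]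
        _ = (∏ r ∈ univ \ ({i, k} : Finset _), (a k - a r))
            * (∏ r ∈ univ \ ({i, k} : Finset _), (a k - a r)) ^ e := by ring
    -- denominator
    have hden : (∏ r ∈ univ \ ({i, k} : Finset _), ∏ s ∈ (univ \ ({i, k} : Finset _)) \ {r},
          ((a k - a r) * (a k - a s)))
        = (∏ r ∈ univ \ ({i, k} : Finset _), (a k - a r)) ^ (2 * e) := by
      have hh : ∀ r ∈ univ \ ({i, k} : Finset (Fin (2 * g + 2))),
          (∏ s ∈ (univ \ ({i, k} : Finset _)) \ {r}, ((a k - a r) * (a k - a s)))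
            = (a k - a r) ^ e * ∏ s ∈ (univ \ ({i, k} : Finset _)) \ {r}, (a k - a s) := by
        intro r hr
        rw [prod_mul_distrib, prod_const, hcardS' k hk r hr]
      rw [prod_congr rfl hh, prod_mul_distrib, prod_pow, hZ, ← pow_add]
      congr 1
      omega
    -- the power of lam
    have hlampow : (lam k) ^ ((e + 1) * e)
        = ((∏ r ∈ univ \ ({i, k} : Finset _), (a k - a r))
            / ∏ r ∈ univ \ ({i, k} : Finset _), (a i - a r)) ^ e := by
      rw [pow_mul, ← he, hlam k hk, prod_div_distrib]
    -- put everything together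
    rw [h1]
    simp only [prod_div_distrib]
    rw [hnum, hden, mul_pow, hlampow]
    field_simp
    have hQe : (∏ r ∈ univ \ ({i, k} : Finset _), (a i - a r)) ^ e
        * ((∏ r ∈ univ \ ({i, k} : Finset _), (a i - a r))⁻¹) ^ e = 1 := by
      rw [← mul_pow, mul_inv_cancel₀ hQne, one_pow]
    linear_combination ((∏ r ∈ univ \ ({i, k} : Finset _), (a k - a r)) ^ (2 * e)
      * (∏ r ∈ univ \ ({i, k} : Finset _), ∏ s ∈ (univ \ ({i, k} : Finset _)) \ {r}, (a r - a s))
      * (a i - a k) ^ ((e + 1) * e)) * hQe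
  -- product of all Q's
  have hQprod : (∏ k ∈ univ \ ({i} : Finset _), ∏ r ∈ univ \ ({i, k} : Finset _), (a i - a r))
      = (∏ r ∈ univ \ ({i} : Finset _), (a i - a r)) ^ (e + 1) := by
    refine mul_left_cancel₀ hA0 ?_
    calc (∏ r ∈ univ \ ({i} : Finset _), (a i - a r))
          * ∏ k ∈ univ \ ({i} : Finset _), ∏ r ∈ univ \ ({i, k} : Finset _), (a i - a r)
        = ∏ k ∈ univ \ ({i} : Finset _),
            ((a i - a k) * ∏ r ∈ univ \ ({i, k} : Finset _), (a i - a r)) := by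
          rw [prod_mul_distrib]
      _ = ∏ k ∈ univ \ ({i} : Finset _), (∏ r ∈ univ \ ({i} : Finset _), (a i - a r)) :=
          prod_congr rfl fun k hk => hQA k (hmemT.mp hk)
      _ = (∏ r ∈ univ \ ({i} : Finset _), (a i - a r)) ^ (e + 2) := by
          rw [prod_const, hcardT]
      _ = (∏ r ∈ univ \ ({i} : Finset _), (a i - a r))
          * (∏ r ∈ univ \ ({i} : Finset _), (a i - a r)) ^ (e + 1) := by ring
  -- product of all D's
  have hDprod : (∏ k ∈ univ \ ({i} : Finset _),
        ∏ r ∈ univ \ ({i, k} : Finset _), ∏ s ∈ (univ \ ({i, k} : Finset _)) \ {r}, (a r - a s))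
      = (∏ k ∈ univ \ ({i} : Finset _), ∏ r ∈ (univ \ ({i} : Finset _)) \ {k}, (a k - a r)) ^ e := by
    refine mul_right_cancel₀ (pow_ne_zero 2 hΔ0) ?_
    calc (∏ k ∈ univ \ ({i} : Finset _),
            ∏ r ∈ univ \ ({i, k} : Finset _), ∏ s ∈ (univ \ ({i, k} : Finset _)) \ {r}, (a r - a s))
          * (∏ k ∈ univ \ ({i} : Finset _), ∏ r ∈ (univ \ ({i} : Finset _)) \ {k}, (a k - a r)) ^ 2
        = (∏ k ∈ univ \ ({i} : Finset _),
            ∏ r ∈ univ \ ({i, k} : Finset _), ∏ s ∈ (univ \ ({i, k} : Finset _)) \ {r}, (a r - a s))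
          * (∏ k ∈ univ \ ({i} : Finset _), ∏ r ∈ univ \ ({i, k} : Finset _), (a k - a r)) ^ 2 := by
          rw [hPΔ]
      _ = ∏ k ∈ univ \ ({i} : Finset _),
            ((∏ r ∈ univ \ ({i, k} : Finset _), ∏ s ∈ (univ \ ({i, k} : Finset _)) \ {r}, (a r - a s))
              * (∏ r ∈ univ \ ({i, k} : Finset _), (a k - a r)) ^ 2) := by
          rw [prod_mul_distrib, prod_pow]
      _ = ∏ k ∈ univ \ ({i} : Finset _),
            (∏ k ∈ univ \ ({i} : Finset _), ∏ r ∈ (univ \ ({i} : Finset _)) \ {k}, (a k - a r)) :=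
          prod_congr rfl fun k hk => hD k (hmemT.mp hk)
      _ = (∏ k ∈ univ \ ({i} : Finset _), ∏ r ∈ (univ \ ({i} : Finset _)) \ {k}, (a k - a r)) ^ (e + 2) := by
          rw [prod_const, hcardT]
      _ = (∏ k ∈ univ \ ({i} : Finset _), ∏ r ∈ (univ \ ({i} : Finset _)) \ {k}, (a k - a r)) ^ e
          * (∏ k ∈ univ \ ({i} : Finset _), ∏ r ∈ (univ \ ({i} : Finset _)) \ {k}, (a k - a r)) ^ 2 := by
          ring
  -- assemble
  rw [prod_congr rfl hd]
  simp only [prod_div_distrib, prod_mul_distrib, prod_pow]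
  rw [hPΔ, hQprod, hDprod]
  rw [show ((∏ k ∈ univ \ ({i} : Finset _), ∏ r ∈ (univ \ ({i} : Finset _)) \ {k}, (a k - a r))
        * (∏ r ∈ univ \ ({i} : Finset _), (a i - a r)) ^ (e + 1)) ^ e
      = (∏ r ∈ univ \ ({i} : Finset _), (a i - a r)) ^ ((e + 1) * e)
        * (∏ k ∈ univ \ ({i} : Finset _), ∏ r ∈ (univ \ ({i} : Finset _)) \ {k}, (a k - a r)) ^ e
      from by ring]
  exact div_self (mul_ne_zero (pow_ne_zero _ hA0) (pow_ne_zero _ hΔ0))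
end

section
/- Let R be a discrete valuation ring with normalized additive valuation v. Let p, q ∈ R[X] and set f = p² + 4q. Suppose f = b·∏_{r=1}^{d} (X − a_r) with b a unit of R, d ≥ 1, and a_1, …, a_d pairwise distinct elements of R, and suppose that v(∏_{s ≠ t} (a_s − a_t)) = d·v(4), the product being over ordered pairs of distinct indices s, t in {1, …, d}. Then v(f'(a_r)) = v(4) for every r = 1, …, d; in particular, for all indices i, j the element f'(a_j)/f'(a_i) is a unit of R. -/
open Finset Polynomial

private lemma sum_nat_helper {d : ℕ} (w : Fin d → ℕ) (m : ℕ) (h : ∀ r, m ≤ w r)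
    (hs : ∑ r, w r = d * m) (r : Fin d) : w r = m := by
  by_contra hne
  have hlt : m < w r := (h r).lt_of_ne (Ne.symm hne)
  have : ∑ _s : Fin d, m < ∑ s, w s :=
    Finset.sum_lt_sum (fun i _ => h i) ⟨r, Finset.mem_univ r, hlt⟩
  simp [Finset.sum_const, hs, Finset.card_univ] at this

private lemma sum_enat_helper {d : ℕ} (v : Fin d → ℕ∞) (m : ℕ) (h : ∀ r, (m : ℕ∞) ≤ v r)
    (hs : ∑ r, v r = d • (m : ℕ∞)) (r : Fin d) : v r = (m : ℕ∞) := by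
  have hdm : (d • (m : ℕ∞)) = ((d * m : ℕ) : ℕ∞) := by
    rw [nsmul_eq_mul]; push_cast; ring
  have hne : ∀ s, v s ≠ ⊤ := by
    intro s hstop
    have : v s ≤ ∑ t, v t := Finset.single_le_sum (f := v) (fun _ _ => zero_le) (mem_univ s)
    rw [hs, hdm, hstop, top_le_iff] at this
    exact (WithTop.natCast_ne_top _) this
  set w : Fin d → ℕ := fun s => (v s).toNat with hw
  have hvw : ∀ s, v s = (w s : ℕ∞) := fun s => (ENat.coe_toNat (hne s)).symm
  have hsw : ∑ s, w s = d * m := by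
    have h2 : ∑ s, v s = ((d * m : ℕ) : ℕ∞) := by rw [hs, hdm]
    have h3 : ∑ s, ((w s : ℕ∞)) = ((d * m : ℕ) : ℕ∞) := by
      rw [← h2]; exact Finset.sum_congr rfl fun s _ => (hvw s).symm
    exact_mod_cast h3
  have hmw : ∀ s, m ≤ w s := by
    intro s
    have := h s
    rw [hvw s, Nat.cast_le] at this
    exact this
  rw [hvw r, sum_nat_helper w m hmw hsw r]

private lemma addVal_prod {R : Type*} [CommRing R] [IsDomain R] [IsDiscreteValuationRing R]
    {ι : Type*} (s : Finset ι) (g : ι → R) :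
    IsDiscreteValuationRing.addVal R (∏ i ∈ s, g i) = ∑ i ∈ s, IsDiscreteValuationRing.addVal R (g i) := by
  classical
  induction s using Finset.induction with
  | empty => simpa using IsDiscreteValuationRing.addVal_one
  | insert _ _ h ih =>
    rw [Finset.prod_insert h, Finset.sum_insert h, IsDiscreteValuationRing.addVal_mul, ih]

/-- in a discrete valuation ring `R`, if `f = p² + 4q` splits as
`b·∏_{r=1}^{d}(X − a_r)` with `b` a unit and the `a_r` pairwise distinct
elements of `R`, and `v(∏_{s ≠ t}(a_s − a_t)) = d·v(4)`, then
`v(f'(a_r)) = v(4)` for every `r`; in particular `f'(a_j)/f'(a_i)` is a unit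
of `R` for all `i, j`. -/
theorem addVal_derivative_eq_addVal_four
    {R : Type*} [CommRing R] [IsDomain R] [IsDiscreteValuationRing R]
    (p q : R[X]) (b : R) (hb : IsUnit b) (d : ℕ) (hd : 1 ≤ d)
    (a : Fin d → R) (ha : Function.Injective a)
    (hf : p ^ 2 + 4 * q = C b * ∏ r, (X - C (a r)))
    (hval : IsDiscreteValuationRing.addVal R
        (∏ s : Fin d, ∏ t ∈ univ \ {s}, (a s - a t)) =
      d • IsDiscreteValuationRing.addVal R (4 : R)) :
    (∀ r, IsDiscreteValuationRing.addVal R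
        ((derivative (p ^ 2 + 4 * q)).eval (a r)) =
      IsDiscreteValuationRing.addVal R (4 : R)) ∧
    ∀ i j, ∃ u : Rˣ, (derivative (p ^ 2 + 4 * q)).eval (a j) =
      u * (derivative (p ^ 2 + 4 * q)).eval (a i) := by
  classical
  set v := IsDiscreteValuationRing.addVal R with hvdef
  -- roots
  have hroot : ∀ r, (p ^ 2 + 4 * q).eval (a r) = 0 := by
    intro r
    rw [hf, eval_mul, eval_C, eval_prod]
    apply mul_eq_zero_of_right
    exact Finset.prod_eq_zero (Finset.mem_univ r) (by simp)
  -- derivative evaluation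
  have hD : ∀ r, (derivative (p ^ 2 + 4 * q)).eval (a r)
      = b * ∏ t ∈ univ \ {r}, (a r - a t) := by
    intro r
    rw [hf, derivative_mul, derivative_C, zero_mul, zero_add, eval_mul, eval_C]
    congr 1
    rw [← Finset.erase_eq]
    rw [show (∏ s : Fin d, (X - C (a s))) = (Multiset.map (fun s => X - C (a s)) univ.val).prod
        from rfl, derivative_prod]
    rw [show ((Multiset.map (fun i => (Multiset.map (fun s => X - C (a s)) (univ.val.erase i)).prod
        * derivative (X - C (a i))) univ.val).sum)
      = ∑ i : Fin d, (∏ s ∈ univ.erase i, (X - C (a s))) * derivative (X - C (a i)) from rfl]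
    rw [eval_finset_sum]
    rw [Finset.sum_eq_single r]
    · simp [eval_prod]
    · intro i _ hir
      rw [derivative_X_sub_C, mul_one, eval_prod]
      exact Finset.prod_eq_zero (Finset.mem_erase.mpr ⟨Ne.symm hir, Finset.mem_univ r⟩) (by simp)
    · intro h; exact absurd (Finset.mem_univ r) h
  -- the big product is nonzero
  have hbig : (∏ s : Fin d, ∏ t ∈ univ \ {s}, (a s - a t)) ≠ 0 := by
    rw [Finset.prod_ne_zero_iff]
    intro s _
    rw [Finset.prod_ne_zero_iff]
    intro t ht
    have hts : t ≠ s := by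
      have := (Finset.mem_sdiff.mp ht).2
      simpa using this
    exact sub_ne_zero.mpr fun he => hts.symm (ha he)
  have h4top : v (4 : R) ≠ ⊤ := by
    intro h
    rw [h] at hval
    have hdtop : d • (⊤ : ℕ∞) = ⊤ := by
      rw [nsmul_eq_mul]
      exact WithTop.mul_top (Nat.cast_ne_zero.mpr (Nat.one_le_iff_ne_zero.mp hd))
    rw [hdtop, IsDiscreteValuationRing.addVal_eq_top_iff] at hval
    exact hbig hval
  have h4 : (4 : R) ≠ 0 := by
    intro h
    exact h4top (by rw [h]; exact IsDiscreteValuationRing.addVal_zero)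
  have hv4 : v (4 : R) = v (2 : R) + v (2 : R) := by
    rw [show (4 : R) = 2 * 2 by norm_num]
    exact IsDiscreteValuationRing.addVal_mul
  have h2top : v (2 : R) ≠ ⊤ := by
    intro h
    exact h4top (by rw [hv4, h, top_add])
  obtain ⟨n2, hn2⟩ : ∃ n : ℕ, v (2 : R) = n := by
    obtain ⟨n, hn⟩ := WithTop.ne_top_iff_exists.mp h2top
    exact ⟨n, hn.symm⟩
  -- lower bound v 4 ≤ v (f'(a r))
  have hge : ∀ r, v (4 : R) ≤ v ((derivative (p ^ 2 + 4 * q)).eval (a r)) := by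
    intro r
    have hev : (derivative (p ^ 2 + 4 * q)).eval (a r)
        = 2 * p.eval (a r) * (derivative p).eval (a r)
          + 4 * (derivative q).eval (a r) := by
      rw [derivative_add, derivative_pow, derivative_mul]
      simp
      try ring
    have hsq : (p.eval (a r)) * (p.eval (a r)) = -(4 * q.eval (a r)) := by
      have h0 := hroot r
      simp only [eval_add, eval_pow, eval_mul] at h0
      have h4' : eval (a r) 4 = (4 : R) := by simp
      rw [h4'] at h0
      linear_combination h0
    have hvsq : v (p.eval (a r)) + v (p.eval (a r)) = v (4 : R) + v (q.eval (a r)) := by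
      have : v ((p.eval (a r)) * (p.eval (a r))) = v (4 * q.eval (a r)) := by
        have hm1 : v (-1 : R) = 0 := by
          have h1 : v (-1 : R) ≤ v (1 : R) :=
            IsDiscreteValuationRing.addVal_le_iff_dvd.mpr (IsUnit.dvd (isUnit_one.neg))
          rw [IsDiscreteValuationRing.addVal_one] at h1
          exact le_antisymm h1 (zero_le)
        rw [hsq, neg_eq_neg_one_mul, IsDiscreteValuationRing.addVal_mul]
        rw [show IsDiscreteValuationRing.addVal R (-1 : R) = v (-1 : R) from rfl, hm1, zero_add]
      rwa [IsDiscreteValuationRing.addVal_mul, IsDiscreteValuationRing.addVal_mul] at this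
    have hpe : v (2 : R) ≤ v (p.eval (a r)) := by
      rcases eq_or_ne (p.eval (a r)) 0 with h0 | h0
      · rw [h0, IsDiscreteValuationRing.addVal_zero]; exact le_top
      · have hpetop : v (p.eval (a r)) ≠ ⊤ := by
          exact fun h => h0 (IsDiscreteValuationRing.addVal_eq_top_iff.mp h)
        obtain ⟨k, hk⟩ := WithTop.ne_top_iff_exists.mp hpetop
        have hcast : ((n2 + n2 : ℕ) : ℕ∞) ≤ ((k + k : ℕ) : ℕ∞) := by
          calc ((n2 + n2 : ℕ) : ℕ∞) = v (4 : R) := by rw [hv4, hn2]; push_cast; rfl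
            _ ≤ v (4 : R) + v (q.eval (a r)) := le_self_add
            _ = v (p.eval (a r)) + v (p.eval (a r)) := hvsq.symm
            _ = ((k + k : ℕ) : ℕ∞) := by rw [← hk]; push_cast; rfl
        have hnk : n2 ≤ k := by
          have := Nat.cast_le.mp hcast
          omega
        rw [hn2, ← hk]
        exact Nat.cast_le.mpr hnk
    have h1 : v (4 : R) ≤ v (2 * p.eval (a r) * (derivative p).eval (a r)) := by
      rw [IsDiscreteValuationRing.addVal_mul, IsDiscreteValuationRing.addVal_mul, hv4]
      exact le_trans (add_le_add_right hpe _) le_self_add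
    have h2' : v (4 : R) ≤ v (4 * (derivative q).eval (a r)) := by
      rw [IsDiscreteValuationRing.addVal_mul]
      exact le_self_add
    rw [hev]
    exact (IsDiscreteValuationRing.addVal R).map_le_add h1 h2'
  -- value of unit b
  have hvb : v b = 0 := by
    have : v b ≤ v (1 : R) := IsDiscreteValuationRing.addVal_le_iff_dvd.mpr hb.dvd
    rw [IsDiscreteValuationRing.addVal_one] at this
    exact le_antisymm this (zero_le)
  -- the sum of the valuations
  have hsum : ∑ r, v ((derivative (p ^ 2 + 4 * q)).eval (a r)) = d • v (4 : R) := by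
    rw [← hval, addVal_prod]
    refine Finset.sum_congr rfl fun r _ => ?_
    rw [hD r, IsDiscreteValuationRing.addVal_mul, hvb, zero_add]
  obtain ⟨m4, hm4⟩ : ∃ n : ℕ, v (4 : R) = n := by
    obtain ⟨n, hn⟩ := WithTop.ne_top_iff_exists.mp h4top
    exact ⟨n, hn.symm⟩
  have main : ∀ r, v ((derivative (p ^ 2 + 4 * q)).eval (a r)) = v (4 : R) := by
    intro r
    rw [hm4]
    exact sum_enat_helper _ m4 (fun s => hm4 ▸ hge s) (by rw [← hm4]; exact hsum) r
  refine ⟨main, ?_⟩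
  intro i j
  have hdvd1 : ((derivative (p ^ 2 + 4 * q)).eval (a i)) ∣
      ((derivative (p ^ 2 + 4 * q)).eval (a j)) :=
    IsDiscreteValuationRing.addVal_le_iff_dvd.mp (by rw [main i, main j])
  have hdvd2 : ((derivative (p ^ 2 + 4 * q)).eval (a j)) ∣
      ((derivative (p ^ 2 + 4 * q)).eval (a i)) :=
    IsDiscreteValuationRing.addVal_le_iff_dvd.mp (by rw [main i, main j])
  obtain ⟨u, hu⟩ := associated_of_dvd_dvd hdvd1 hdvd2
  exact ⟨u, by rw [← hu]; ring⟩
end
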